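/- For every natural number n ≥ 5, the partition lattice Part(n) is four-generated, i.e., there exists a four-element subset of Part(n) whose generated sublattice is all of Part(n). -/
import Mathlib

/-- A lattice is *four-generated* if it has a four-element subset `X` such that the
smallest sublattice containing `X` (the closure of `X` under binary meets and joins)
is the whole lattice. -/
def FourGenerated (L : Type*) [Lattice L] : Prop :=
  ∃ X : Finset L, X.card = 4 ∧ latticeClosure (X : Set L) = Set.univ


set_option linter.unnecessarySeqFocus false

namespace PartGen
variable {n : ℕ}

/-- The atom-ish setoid identifying `a` and `b` (and nothing else). -/
def eAtom (a b : Fin n) : Setoid (Fin n) :=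
  Setoid.comap (fun z => if z = a then b else z) ⊥

lemma eAtom_iff {a b x y : Fin n} :
    eAtom a b x y ↔ x = y ∨ (x = a ∧ y = b) ∨ (x = b ∧ y = a) := by
  unfold eAtom
  rw [Setoid.comap_rel]
  simp only [Setoid.bot_def]
  by_cases hxa : x = a <;> by_cases hya : y = a <;> simp [hxa, hya] <;> aesop

lemma eAtom_rel (a b : Fin n) : eAtom a b a b := eAtom_iff.2 (Or.inr (Or.inl ⟨rfl, rfl⟩))

lemma eAtom_le {a b : Fin n} {s : Setoid (Fin n)} (h : s a b) : eAtom a b ≤ s := by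
  intro u v huv
  rcases eAtom_iff.1 huv with rfl | ⟨rfl, rfl⟩ | ⟨rfl, rfl⟩
  · exact s.refl' u
  · exact h
  · exact s.symm' h

lemma eAtom_comm (a b : Fin n) : eAtom a b = eAtom b a := by
  ext u v; rw [eAtom_iff, eAtom_iff]; tauto

lemma eAtom_self (a : Fin n) : eAtom a a = ⊥ := by
  ext u v
  rw [eAtom_iff]
  simp only [Setoid.bot_def]
  aesop

/-- Extension of a setoid on `Fin n` to `Fin (n+1)` with `{last}` as a new singleton class. -/
def iot (r : Setoid (Fin n)) : Setoid (Fin (n + 1)) where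
  r x y := x = y ∨ ∃ a b, x = a.castSucc ∧ y = b.castSucc ∧ r a b
  iseqv := by
    constructor
    · exact fun x => Or.inl rfl
    · rintro x y (rfl | ⟨a, b, rfl, rfl, h⟩)
      · exact Or.inl rfl
      · exact Or.inr ⟨b, a, rfl, rfl, r.symm' h⟩
    · rintro x y z (rfl | ⟨a, b, rfl, rfl, h⟩) h2
      · exact h2
      · rcases h2 with h2 | ⟨b', c, hb, rfl, h'⟩
        · exact Or.inr ⟨a, b, rfl, h2.symm ▸ rfl, h⟩
        · rw [Fin.castSucc_inj] at hb
          exact Or.inr ⟨a, c, rfl, rfl, r.trans' h (hb ▸ h')⟩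

lemma iot_iff {r : Setoid (Fin n)} {x y : Fin (n + 1)} :
    iot r x y ↔ x = y ∨ ∃ a b, x = a.castSucc ∧ y = b.castSucc ∧ r a b := Iff.rfl

lemma iot_castSucc {r : Setoid (Fin n)} {a b : Fin n} :
    iot r a.castSucc b.castSucc ↔ r a b := by
  rw [iot_iff]
  constructor
  · rintro (h | ⟨a', b', ha, hb, h⟩)
    · rw [Fin.castSucc_inj] at h; exact h ▸ r.refl' a
    · rw [Fin.castSucc_inj] at ha hb; exact ha ▸ hb ▸ h
  · exact fun h => Or.inr ⟨a, b, rfl, rfl, h⟩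

lemma iot_last {r : Setoid (Fin n)} {x : Fin (n + 1)} :
    iot r (Fin.last n) x ↔ x = Fin.last n := by
  rw [iot_iff]
  constructor
  · rintro (rfl | ⟨a, b, ha, rfl, h⟩)
    · rfl
    · exact absurd ha.symm (Fin.castSucc_lt_last a).ne
  · rintro rfl; exact Or.inl rfl

lemma iot_last' {r : Setoid (Fin n)} {x : Fin (n + 1)} :
    iot r x (Fin.last n) ↔ x = Fin.last n :=
  ⟨fun h => iot_last.1 ((iot r).symm' h), fun h => h ▸ (iot r).refl' _⟩

/-- Restriction, right adjoint to `iot`. -/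
def res (s : Setoid (Fin (n + 1))) : Setoid (Fin n) := Setoid.comap Fin.castSucc s

lemma iot_le_iff {r : Setoid (Fin n)} {s : Setoid (Fin (n + 1))} :
    iot r ≤ s ↔ r ≤ res s := by
  constructor
  · intro h a b hab
    exact h (iot_castSucc.2 hab)
  · rintro h x y (rfl | ⟨a, b, rfl, rfl, hab⟩)
    · exact s.refl' x
    · exact h hab

lemma iot_mono {r r' : Setoid (Fin n)} (h : r ≤ r') : iot r ≤ iot r' := by
  rintro x y (rfl | ⟨a, b, rfl, rfl, hab⟩)
  · exact (iot r').refl' x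
  · exact iot_castSucc.2 (h hab)

lemma iot_sup (r s : Setoid (Fin n)) : iot (r ⊔ s) = iot r ⊔ iot s := by
  apply le_antisymm
  · rw [iot_le_iff]
    apply sup_le
    · rw [← iot_le_iff]; exact le_sup_left
    · rw [← iot_le_iff]; exact le_sup_right
  · exact sup_le (iot_mono le_sup_left) (iot_mono le_sup_right)

lemma iot_inf (r s : Setoid (Fin n)) : iot (r ⊓ s) = iot r ⊓ iot s := by
  ext x y
  rw [Setoid.inf_iff_and, iot_iff, iot_iff, iot_iff]
  constructor
  · rintro (rfl | ⟨a, b, rfl, rfl, hab⟩)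
    · exact ⟨Or.inl rfl, Or.inl rfl⟩
    · exact ⟨Or.inr ⟨a, b, rfl, rfl, hab.1⟩, Or.inr ⟨a, b, rfl, rfl, hab.2⟩⟩
  · rintro ⟨(rfl | ⟨a, b, rfl, rfl, hab⟩), h2⟩
    · exact Or.inl rfl
    · rcases h2 with h2 | ⟨a', b', ha, hb, h'⟩
      · rw [Fin.castSucc_inj] at h2
        exact Or.inr ⟨a, b, rfl, rfl, ⟨hab, h2 ▸ s.refl' a⟩⟩
      · rw [Fin.castSucc_inj] at ha hb
        exact Or.inr ⟨a, b, rfl, rfl, ⟨hab, ha ▸ hb ▸ h'⟩⟩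

lemma iot_bot : iot (⊥ : Setoid (Fin n)) = ⊥ := by
  ext x y
  rw [iot_iff]
  simp only [Setoid.bot_def]
  constructor
  · rintro (rfl | ⟨a, b, rfl, rfl, hab⟩)
    · rfl
    · exact congrArg Fin.castSucc hab
  · rintro rfl; exact Or.inl rfl

lemma iot_eAtom (a b : Fin n) : iot (eAtom a b) = eAtom a.castSucc b.castSucc := by
  ext x y
  rw [eAtom_iff, iot_iff]
  constructor
  · rintro (rfl | ⟨a', b', rfl, rfl, hab⟩)
    · exact Or.inl rfl
    · rcases eAtom_iff.1 hab with rfl | ⟨rfl, rfl⟩ | ⟨rfl, rfl⟩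
      · exact Or.inl rfl
      · exact Or.inr (Or.inl ⟨rfl, rfl⟩)
      · exact Or.inr (Or.inr ⟨rfl, rfl⟩)
  · rintro (rfl | ⟨rfl, rfl⟩ | ⟨rfl, rfl⟩)
    · exact Or.inl rfl
    · exact Or.inr ⟨a, b, rfl, rfl, eAtom_rel a b⟩
    · exact Or.inr ⟨b, a, rfl, rfl, (eAtom a b).symm' (eAtom_rel a b)⟩


/-- map `Fin (n+1) → Fin n` sending `last` to `p`. -/
def extFun (p : Fin n) : Fin (n + 1) → Fin n := fun z =>
  if h : (z : ℕ) < n then ⟨z, h⟩ else p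

lemma extFun_castSucc (p a : Fin n) : extFun p a.castSucc = a := by
  unfold extFun
  rw [dif_pos (by simpa using a.isLt)]
  exact Fin.ext (by simp)

lemma extFun_last (p : Fin n) : extFun p (Fin.last n) = p := by
  unfold extFun
  rw [dif_neg (by simp)]

/-- Extension of a setoid on `Fin n` to `Fin (n+1)`, attaching `last` to the class of `p`. -/
def att (r : Setoid (Fin n)) (p : Fin n) : Setoid (Fin (n + 1)) :=
  Setoid.comap (extFun p) r

lemma att_iff {r : Setoid (Fin n)} {p : Fin n} {x y : Fin (n + 1)} :
    att r p x y ↔ r (extFun p x) (extFun p y) := Iff.rfl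

lemma att_castSucc {r : Setoid (Fin n)} {p a b : Fin n} :
    att r p a.castSucc b.castSucc ↔ r a b := by
  rw [att_iff, extFun_castSucc, extFun_castSucc]

lemma att_castSucc_last {r : Setoid (Fin n)} {p a : Fin n} :
    att r p a.castSucc (Fin.last n) ↔ r a p := by
  rw [att_iff, extFun_castSucc, extFun_last]

/-- bridge: `att r p = iot r ⊔ eAtom p.castSucc last`. -/
lemma att_eq (r : Setoid (Fin n)) (p : Fin n) :
    att r p = iot r ⊔ eAtom p.castSucc (Fin.last n) := by
  apply le_antisymm
  · intro x y hxy
    have J := iot r ⊔ eAtom p.castSucc (Fin.last n)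
    rcases Fin.eq_castSucc_or_eq_last x with ⟨a, rfl⟩ | rfl <;>
      rcases Fin.eq_castSucc_or_eq_last y with ⟨b, rfl⟩ | rfl
    · have h : r a b := att_castSucc.1 hxy
      exact le_sup_left (α := Setoid (Fin (n+1))) (iot_castSucc.2 h)
    · have h : r a p := att_castSucc_last.1 hxy
      refine Setoid.trans' _ (le_sup_left (α := Setoid (Fin (n+1))) (iot_castSucc.2 h)) ?_
      exact le_sup_right (α := Setoid (Fin (n+1))) (eAtom_rel _ _)
    · have h : r p b := by
        have := att_iff.1 hxy; rwa [extFun_last, extFun_castSucc] at this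
      refine Setoid.trans' _ ?_ (le_sup_left (α := Setoid (Fin (n+1))) (iot_castSucc.2 h))
      exact (iot r ⊔ eAtom p.castSucc (Fin.last n)).symm'
        (le_sup_right (α := Setoid (Fin (n+1))) (eAtom_rel _ _))
    · exact Setoid.refl' _ _
  · apply sup_le
    · intro x y hxy
      rcases iot_iff.1 hxy with rfl | ⟨a, b, rfl, rfl, hab⟩
      · exact Setoid.refl' _ _
      · exact att_castSucc.2 hab
    · intro x y hxy
      rcases eAtom_iff.1 hxy with rfl | ⟨rfl, rfl⟩ | ⟨rfl, rfl⟩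
      · exact Setoid.refl' _ _
      · exact att_castSucc_last.2 (r.refl' p)
      · exact (att r p).symm' (att_castSucc_last.2 (r.refl' p))

lemma att_inf_iotTop (r : Setoid (Fin n)) (p : Fin n) :
    att r p ⊓ iot ⊤ = iot r := by
  ext x y
  rw [Setoid.inf_iff_and]
  rcases Fin.eq_castSucc_or_eq_last x with ⟨a, rfl⟩ | rfl <;>
    rcases Fin.eq_castSucc_or_eq_last y with ⟨b, rfl⟩ | rfl
  · rw [att_castSucc, iot_castSucc, iot_castSucc]
    simp [Setoid.top_def]
  · simp [iot_last', (Fin.castSucc_lt_last a).ne]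
  · simp [iot_last, (Fin.castSucc_lt_last b).ne]
  · simp [Setoid.refl']


def upd (x q z : Fin n) : Fin n := if z = x then q else z

lemma upd_self (x q : Fin n) : upd x q x = q := if_pos rfl

lemma upd_ne {z x : Fin n} (q : Fin n) (h : z ≠ x) : upd x q z = z := if_neg h

lemma comap_upd_iff {x q a b : Fin n} {s : Setoid (Fin n)} :
    Setoid.comap (upd x q) s a b ↔ s (upd x q a) (upd x q b) := Iff.rfl

lemma merge {x q : Fin n} (hxq : x ≠ q) {s : Setoid (Fin n)} (hxs : ∀ z, s x z → z = x) :
    eAtom x q ⊔ s = Setoid.comap (upd x q) s := by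
  apply le_antisymm
  · apply sup_le
    · apply eAtom_le
      rw [comap_upd_iff, upd_self, upd_ne q (Ne.symm hxq)]
    · intro a b hab
      rw [comap_upd_iff]
      by_cases hax : a = x
      · have hb : b = x := hxs b (hax ▸ hab)
        rw [hax, hb]
      · have hbx : b ≠ x := fun hb => hax (hxs a (s.symm' (hb ▸ hab)))
        rw [upd_ne q hax, upd_ne q hbx]
        exact hab
  · intro a b hab
    rw [comap_upd_iff] at hab
    by_cases hax : a = x <;> by_cases hbx : b = x
    · rw [hax, hbx]
    · rw [hax, upd_self, upd_ne q hbx] at hab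
      have h1 : (eAtom x q ⊔ s) a q := by
        rw [hax]; exact le_sup_left (α := Setoid (Fin n)) (eAtom_rel x q)
      exact Setoid.trans' _ h1 (le_sup_right (α := Setoid (Fin n)) hab)
    · rw [hbx, upd_self, upd_ne q hax] at hab
      have h1 : (eAtom x q ⊔ s) q b := by
        rw [hbx]; exact Setoid.symm' _ (le_sup_left (α := Setoid (Fin n)) (eAtom_rel x q))
      exact Setoid.trans' _ (le_sup_right (α := Setoid (Fin n)) hab) h1
    · rw [upd_ne q hax, upd_ne q hbx] at hab
      exact le_sup_right (α := Setoid (Fin n)) hab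

lemma att_last_castSucc {r : Setoid (Fin n)} {p b : Fin n} :
    att r p (Fin.last n) b.castSucc ↔ r p b := by
  rw [att_iff, extFun_last, extFun_castSucc]

lemma extract (Q1 Q2 : Setoid (Fin n)) (p q x : Fin n)
    (hQinf : Q1 ⊓ Q2 = ⊥)
    (hdisj : ∀ z, Q1 p z → Q2 q z → False)
    (hpx : Q1 p x) (hxs : ∀ z, Q2 x z → z = x) :
    att Q1 p ⊓ (iot (eAtom x q) ⊔ att Q2 q) = eAtom x.castSucc (Fin.last n) := by
  have hq2qx : ¬ Q2 q x := fun h => hdisj x hpx h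
  have hxq : x ≠ q := fun h => hq2qx (h ▸ Q2.refl' q)
  have h1 : iot (eAtom x q) ⊔ att Q2 q = att (eAtom x q ⊔ Q2) q := by
    rw [att_eq Q2 q, att_eq (eAtom x q ⊔ Q2) q, iot_sup, sup_assoc]
  rw [h1, merge hxq hxs]
  ext u v
  rw [Setoid.inf_iff_and]
  rcases Fin.eq_castSucc_or_eq_last u with ⟨a, rfl⟩ | rfl <;>
    rcases Fin.eq_castSucc_or_eq_last v with ⟨b, rfl⟩ | rfl
  · rw [att_castSucc, att_castSucc, comap_upd_iff, eAtom_iff]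
    simp only [Fin.castSucc_inj, (Fin.castSucc_lt_last a).ne, (Fin.castSucc_lt_last b).ne,
      (Fin.castSucc_lt_last a).ne', (Fin.castSucc_lt_last b).ne', false_and, and_false, or_false]
    constructor
    · rintro ⟨h1, h2⟩
      by_cases hax : a = x <;> by_cases hbx : b = x
      · exact hax.trans hbx.symm
      · rw [hax, upd_self, upd_ne q hbx] at h2
        rw [hax] at h1
        exact absurd h2 (fun h2 => hdisj b (Setoid.trans' _ hpx h1) h2)
      · rw [hbx, upd_self, upd_ne q hax] at h2
        rw [hbx] at h1
        exact absurd (Q2.symm' h2)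
          (fun h2' => hdisj a (Setoid.trans' _ hpx (Q1.symm' h1)) h2')
      · rw [upd_ne q hax, upd_ne q hbx] at h2
        have : (Q1 ⊓ Q2) a b := ⟨h1, h2⟩
        rw [hQinf] at this
        exact this
    · rintro rfl
      exact ⟨Q1.refl' _, Setoid.refl' _ _⟩
  · rw [att_castSucc_last, att_castSucc_last, comap_upd_iff, eAtom_iff]
    simp only [Fin.castSucc_inj, (Fin.castSucc_lt_last a).ne, (Fin.castSucc_lt_last a).ne',
      false_and, and_false, and_true, or_false, false_or]
    rw [upd_ne q (Ne.symm hxq)]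
    constructor
    · rintro ⟨h1, h2⟩
      by_cases hax : a = x
      · exact hax
      · rw [upd_ne q hax] at h2
        exact absurd (Q2.symm' h2) (fun h2' => hdisj a (Q1.symm' h1) h2')
    · rintro rfl
      rw [upd_self]
      exact ⟨Q1.symm' hpx, Q2.refl' q⟩
  · rw [att_last_castSucc, att_last_castSucc, comap_upd_iff, eAtom_iff]
    simp only [Fin.castSucc_inj, (Fin.castSucc_lt_last b).ne, (Fin.castSucc_lt_last b).ne',
      false_and, and_false, and_true, true_and, or_false, false_or]
    rw [upd_ne q (Ne.symm hxq)]
    constructor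
    · rintro ⟨h1, h2⟩
      by_cases hbx : b = x
      · exact hbx
      · rw [upd_ne q hbx] at h2
        exact absurd h2 (fun h2' => hdisj b h1 h2')
    · rintro rfl
      rw [upd_self]
      exact ⟨hpx, Q2.refl' q⟩
  · simp [eAtom_iff, Setoid.refl' _ (Fin.last n), Setoid.refl']

/-- The setoid with `{a,b,c}` as its only nontrivial class. -/
def blk (a b c : Fin n) : Setoid (Fin n) where
  r x y := x = y ∨ ((x = a ∨ x = b ∨ x = c) ∧ (y = a ∨ y = b ∨ y = c))
  iseqv := by
    constructor
    · exact fun x => Or.inl rfl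
    · rintro x y (rfl | ⟨hx, hy⟩)
      · exact Or.inl rfl
      · exact Or.inr ⟨hy, hx⟩
    · rintro x y z (rfl | ⟨hx, hy⟩) h2
      · exact h2
      · rcases h2 with rfl | ⟨hy', hz⟩
        · exact Or.inr ⟨hx, hy⟩
        · exact Or.inr ⟨hx, hz⟩

lemma blk_iff {a b c x y : Fin n} :
    blk a b c x y ↔ x = y ∨ ((x = a ∨ x = b ∨ x = c) ∧ (y = a ∨ y = b ∨ y = c)) := Iff.rfl

lemma sup_eq_blk (a b c : Fin n) : eAtom a b ⊔ eAtom b c = blk a b c := by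
  apply le_antisymm
  · apply sup_le
    · exact eAtom_le (Or.inr ⟨Or.inl rfl, Or.inr (Or.inl rfl)⟩)
    · exact eAtom_le (Or.inr ⟨Or.inr (Or.inl rfl), Or.inr (Or.inr rfl)⟩)
  · intro x y hxy
    have hab : (eAtom a b ⊔ eAtom b c) a b := le_sup_left (α := Setoid (Fin n)) (eAtom_rel a b)
    have hbc : (eAtom a b ⊔ eAtom b c) b c := le_sup_right (α := Setoid (Fin n)) (eAtom_rel b c)
    have hac : (eAtom a b ⊔ eAtom b c) a c := Setoid.trans' _ hab hbc
    rcases blk_iff.1 hxy with rfl | ⟨(rfl | rfl | rfl), (rfl | rfl | rfl)⟩ <;>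
      first
        | exact Setoid.refl' _ _
        | exact hab
        | exact hbc
        | exact hac
        | exact Setoid.symm' _ hab
        | exact Setoid.symm' _ hbc
        | exact Setoid.symm' _ hac

lemma blk_inf_blk {a b c d : Fin n} (hba : b ≠ a) (hbc : b ≠ c) (hbd : b ≠ d)
    (hda : d ≠ a) (hdc : d ≠ c) :
    blk a b c ⊓ blk a d c = eAtom a c := by
  ext x y
  rw [Setoid.inf_iff_and, blk_iff, blk_iff, eAtom_iff]
  constructor
  · rintro ⟨(rfl | ⟨hx1, hy1⟩), h2⟩
    · exact Or.inl rfl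
    · rcases h2 with rfl | ⟨hx2, hy2⟩
      · exact Or.inl rfl
      · have hx : x = a ∨ x = c := by
          rcases hx1 with rfl | rfl | rfl
          · exact Or.inl rfl
          · rcases hx2 with h | h | h
            · exact absurd h hba
            · exact absurd h hbd
            · exact absurd h hbc
          · exact Or.inr rfl
        have hy : y = a ∨ y = c := by
          rcases hy1 with rfl | rfl | rfl
          · exact Or.inl rfl
          · rcases hy2 with h | h | h
            · exact absurd h hba
            · exact absurd h hbd
            · exact absurd h hbc
          · exact Or.inr rfl
        rcases hx with rfl | rfl <;> rcases hy with rfl | rfl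
        · exact Or.inl rfl
        · exact Or.inr (Or.inl ⟨rfl, rfl⟩)
        · exact Or.inr (Or.inr ⟨rfl, rfl⟩)
        · exact Or.inl rfl
  · rintro (rfl | ⟨rfl, rfl⟩ | ⟨rfl, rfl⟩)
    · exact ⟨Or.inl rfl, Or.inl rfl⟩
    · exact ⟨Or.inr ⟨Or.inl rfl, Or.inr (Or.inr rfl)⟩, Or.inr ⟨Or.inl rfl, Or.inr (Or.inr rfl)⟩⟩
    · exact ⟨Or.inr ⟨Or.inr (Or.inr rfl), Or.inl rfl⟩, Or.inr ⟨Or.inr (Or.inr rfl), Or.inl rfl⟩⟩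

lemma atom_inf_atom_bot {a b c : Fin n} (hab : a ≠ b) (hac : a ≠ c) (hbc : b ≠ c) :
    eAtom a c ⊓ eAtom b c = ⊥ := by
  ext x y
  rw [Setoid.inf_iff_and, eAtom_iff, eAtom_iff]
  simp only [Setoid.bot_def]
  constructor
  · rintro ⟨h1, h2⟩
    rcases h1 with rfl | ⟨rfl, rfl⟩ | ⟨rfl, rfl⟩
    · rfl
    · rcases h2 with h | ⟨h3, _⟩ | ⟨h3, _⟩
      · exact h
      · exact absurd h3 hab
      · exact h3
    · rcases h2 with h | ⟨_, h4⟩ | ⟨_, h4⟩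
      · exact h
      · exact h4.symm
      · exact absurd h4 hab
  · rintro rfl
    exact ⟨Or.inl rfl, Or.inl rfl⟩

lemma sup_mem_closure {L : Type*} [Lattice L] {S : Set L} {a b : L}
    (ha : a ∈ latticeClosure S) (hb : b ∈ latticeClosure S) : a ⊔ b ∈ latticeClosure S :=
  (isSublattice_latticeClosure (s := S)).supClosed ha hb

lemma inf_mem_closure {L : Type*} [Lattice L] {S : Set L} {a b : L}
    (ha : a ∈ latticeClosure S) (hb : b ∈ latticeClosure S) : a ⊓ b ∈ latticeClosure S :=
  (isSublattice_latticeClosure (s := S)).infClosed ha hb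

lemma closure_eq_univ_of_atoms {m : ℕ} {S : Set (Setoid (Fin m))}
    (hbot : ⊥ ∈ latticeClosure S) (hat : ∀ a b : Fin m, eAtom a b ∈ latticeClosure S) :
    latticeClosure S = Set.univ := by
  apply Set.eq_univ_of_forall
  intro s
  classical
  have hs : s = (Finset.univ.filter (fun pr : Fin m × Fin m => s pr.1 pr.2)).sup
      (fun pr => eAtom pr.1 pr.2) := by
    apply le_antisymm
    · intro u v huv
      exact Finset.le_sup (f := fun pr : Fin m × Fin m => eAtom pr.1 pr.2)
        (Finset.mem_filter.2 ⟨Finset.mem_univ (u, v), huv⟩) (eAtom_rel u v)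
    · apply Finset.sup_le
      rintro ⟨u, v⟩ hm
      exact eAtom_le (Finset.mem_filter.1 hm).2
  rw [hs]
  exact Finset.sup_induction hbot (fun a1 h1 a2 h2 => sup_mem_closure h1 h2)
    (fun pr _ => hat pr.1 pr.2)

lemma iot_mem_closure {S : Set (Setoid (Fin n))} {T : Set (Setoid (Fin (n + 1)))}
    (h : ∀ u ∈ S, iot u ∈ latticeClosure T) :
    ∀ t ∈ latticeClosure S, iot t ∈ latticeClosure T := by
  intro t ht
  have hsub : latticeClosure S ⊆ {u | iot u ∈ latticeClosure T} := by
    apply latticeClosure_min h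
    constructor
    · intro a ha b hb
      show iot (a ⊔ b) ∈ latticeClosure T
      rw [iot_sup]
      exact sup_mem_closure ha hb
    · intro a ha b hb
      show iot (a ⊓ b) ∈ latticeClosure T
      rw [iot_inf]
      exact inf_mem_closure ha hb
  exact hsub ht

/-- The inductive invariant: a good generating quadruple of `Part(m)`. -/
def Inv (m : ℕ) : Prop :=
  ∃ P1 P2 Q1 Q2 : Setoid (Fin m),
    latticeClosure {P1, P2, Q1, Q2} = Set.univ ∧
    P1 ⊔ P2 = ⊤ ∧ P1 ⊓ P2 = ⊥ ∧ Q1 ⊓ Q2 = ⊥ ∧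
    (∃ w, ∀ z, P1 w z → z = w) ∧
    ∃ p q x y,
      (∀ z, Q1 p z → Q2 q z → False) ∧
      Q1 p x ∧ (∀ z, Q2 x z → z = x) ∧
      Q2 q y ∧ (∀ z, Q1 y z → z = y) ∧
      x ≠ y ∧
      (∀ z, (Q1 ⊔ Q2) p z ∨ (Q1 ⊔ Q2) q z)

theorem inv_succ {m : ℕ} (h : Inv m) : Inv (m + 1) := by
  obtain ⟨P1, P2, Q1, Q2, hcl, hPsup, hPinf, hQinf, ⟨w, hw⟩,
    p, q, x, y, hdisj, hpx, hxs, hqy, hys, hxy, hjoin⟩ := h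
  have hq1py : ¬ Q1 p y := fun h' => hdisj y h' hqy
  refine ⟨att Q1 p, att Q2 q, iot P1, iot P2, ?G1, ?G2, ?G3, ?G4, ⟨y.castSucc, ?G5⟩,
    Fin.last m, w.castSucc, Fin.last m, w.castSucc, ?G6, ?G7, ?G8, ?G9, ?G10, ?G11, ?G12⟩
  case G1 =>
    set S : Set (Setoid (Fin (m + 1))) := {att Q1 p, att Q2 q, iot P1, iot P2} with hS
    have m1 : att Q1 p ∈ latticeClosure S := subset_latticeClosure (by simp [hS])
    have m2 : att Q2 q ∈ latticeClosure S := subset_latticeClosure (by simp [hS])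
    have m3 : iot P1 ∈ latticeClosure S := subset_latticeClosure (by simp [hS])
    have m4 : iot P2 ∈ latticeClosure S := subset_latticeClosure (by simp [hS])
    have hiTop : iot (⊤ : Setoid (Fin m)) ∈ latticeClosure S := by
      rw [← hPsup, iot_sup]; exact sup_mem_closure m3 m4
    have hiQ1 : iot Q1 ∈ latticeClosure S := by
      rw [← att_inf_iotTop Q1 p]; exact inf_mem_closure m1 hiTop
    have hiQ2 : iot Q2 ∈ latticeClosure S := by
      rw [← att_inf_iotTop Q2 q]; exact inf_mem_closure m2 hiTop
    have hiota : ∀ t : Setoid (Fin m), iot t ∈ latticeClosure S := by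
      intro t
      apply iot_mem_closure (S := {P1, P2, Q1, Q2})
      · intro u hu
        rcases hu with rfl | rfl | rfl | rfl
        · exact m3
        · exact m4
        · exact hiQ1
        · exact hiQ2
      · rw [hcl]; trivial
    have hex : eAtom x.castSucc (Fin.last m) ∈ latticeClosure S := by
      rw [← extract Q1 Q2 p q x hQinf hdisj hpx hxs]
      exact inf_mem_closure m1 (sup_mem_closure (hiota (eAtom x q)) m2)
    have hey : eAtom y.castSucc (Fin.last m) ∈ latticeClosure S := by
      rw [← extract Q2 Q1 q p y (by rw [inf_comm]; exact hQinf)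
        (fun z h1 h2 => hdisj z h2 h1) hqy hys]
      exact inf_mem_closure m2 (sup_mem_closure (hiota (eAtom y p)) m1)
    have hatomlast : ∀ c : Fin m, eAtom c.castSucc (Fin.last m) ∈ latticeClosure S := by
      intro c
      by_cases hcx : c = x
      · exact hcx ▸ hex
      by_cases hcy : c = y
      · exact hcy ▸ hey
      have hb1 : eAtom c.castSucc x.castSucc ∈ latticeClosure S := by
        have := hiota (eAtom c x); rwa [iot_eAtom] at this
      have hb2 : eAtom c.castSucc y.castSucc ∈ latticeClosure S := by
        have := hiota (eAtom c y); rwa [iot_eAtom] at this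
      have hkey : blk c.castSucc x.castSucc (Fin.last m) ⊓ blk c.castSucc y.castSucc (Fin.last m)
          = eAtom c.castSucc (Fin.last m) := by
        apply blk_inf_blk
        · exact fun hh => hcx (Fin.castSucc_inj.1 hh).symm
        · exact (Fin.castSucc_lt_last x).ne
        · exact fun hh => hxy (Fin.castSucc_inj.1 hh)
        · exact fun hh => hcy (Fin.castSucc_inj.1 hh).symm
        · exact (Fin.castSucc_lt_last y).ne
      rw [← hkey, ← sup_eq_blk, ← sup_eq_blk]
      exact inf_mem_closure (sup_mem_closure hb1 hex) (sup_mem_closure hb2 hey)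
    have hbot : (⊥ : Setoid (Fin (m + 1))) ∈ latticeClosure S := by
      rw [← atom_inf_atom_bot (a := x.castSucc) (b := y.castSucc) (c := Fin.last m)
        (fun hh => hxy (Fin.castSucc_inj.1 hh)) (Fin.castSucc_lt_last x).ne
        (Fin.castSucc_lt_last y).ne]
      exact inf_mem_closure hex hey
    apply closure_eq_univ_of_atoms hbot
    intro a b
    rcases Fin.eq_castSucc_or_eq_last a with ⟨a', rfl⟩ | rfl <;>
      rcases Fin.eq_castSucc_or_eq_last b with ⟨b', rfl⟩ | rfl
    · have := hiota (eAtom a' b'); rwa [iot_eAtom] at this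
    · exact hatomlast a'
    · rw [eAtom_comm]; exact hatomlast b'
    · rw [eAtom_self]; exact hbot
  case G2 =>
    rw [Setoid.eq_top_iff]
    have hle : iot Q1 ⊔ iot Q2 ≤ att Q1 p ⊔ att Q2 q := by
      apply sup_le
      · refine le_trans ?_ (le_sup_left (a := att Q1 p))
        rw [att_eq]; exact le_sup_left
      · refine le_trans ?_ (le_sup_right (b := att Q2 q))
        rw [att_eq]; exact le_sup_left
    have key : ∀ u, (att Q1 p ⊔ att Q2 q) u (Fin.last m) := by
      intro u
      rcases Fin.eq_castSucc_or_eq_last u with ⟨a, rfl⟩ | rfl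
      · rcases hjoin a with h | h
        · have h1 : (iot Q1 ⊔ iot Q2) p.castSucc a.castSucc := by
            rw [← iot_sup]; exact iot_castSucc.2 h
          have h2 := Setoid.symm' _ (hle h1)
          have h3 : (att Q1 p ⊔ att Q2 q) p.castSucc (Fin.last m) :=
            le_sup_left (α := Setoid (Fin (m + 1))) (att_castSucc_last.2 (Q1.refl' p))
          exact Setoid.trans' _ h2 h3
        · have h1 : (iot Q1 ⊔ iot Q2) q.castSucc a.castSucc := by
            rw [← iot_sup]; exact iot_castSucc.2 h
          have h2 := Setoid.symm' _ (hle h1)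
          have h3 : (att Q1 p ⊔ att Q2 q) q.castSucc (Fin.last m) :=
            le_sup_right (α := Setoid (Fin (m + 1))) (att_castSucc_last.2 (Q2.refl' q))
          exact Setoid.trans' _ h2 h3
      · exact Setoid.refl' _ _
    exact fun u v => Setoid.trans' _ (key u) (Setoid.symm' _ (key v))
  case G3 =>
    ext u v
    rw [Setoid.inf_iff_and]
    simp only [Setoid.bot_def]
    rcases Fin.eq_castSucc_or_eq_last u with ⟨a, rfl⟩ | rfl <;>
      rcases Fin.eq_castSucc_or_eq_last v with ⟨b, rfl⟩ | rfl
    · rw [att_castSucc, att_castSucc]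
      constructor
      · rintro ⟨h1, h2⟩
        have hab : (Q1 ⊓ Q2) a b := ⟨h1, h2⟩
        rw [hQinf] at hab
        exact congrArg Fin.castSucc hab
      · intro hh
        rw [Fin.castSucc_inj] at hh
        subst hh
        exact ⟨Q1.refl' a, Q2.refl' a⟩
    · rw [att_castSucc_last, att_castSucc_last]
      constructor
      · rintro ⟨h1, h2⟩
        exact absurd (hdisj a (Q1.symm' h1) (Q2.symm' h2)) not_false
      · intro hh
        exact absurd hh (Fin.castSucc_lt_last a).ne
    · rw [att_last_castSucc, att_last_castSucc]
      constructor
      · rintro ⟨h1, h2⟩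
        exact absurd (hdisj b h1 h2) not_false
      · intro hh
        exact absurd hh (Fin.castSucc_lt_last b).ne'
    · simp [Setoid.refl']
  case G4 =>
    rw [← iot_inf, hPinf, iot_bot]
  case G5 =>
    intro z hz
    rcases Fin.eq_castSucc_or_eq_last z with ⟨b, rfl⟩ | rfl
    · rw [att_castSucc] at hz
      rw [hys b hz]
    · rw [att_castSucc_last] at hz
      have hp : p = y := hys p hz
      exact absurd (show Q1 p y by rw [hp]) hq1py
  case G6 =>
    intro z h1 h2
    rw [iot_last] at h1
    subst h1
    rw [iot_last'] at h2
    exact (Fin.castSucc_lt_last w).ne h2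
  case G7 => exact Setoid.refl' _ _
  case G8 => exact fun z h => iot_last.1 h
  case G9 => exact Setoid.refl' _ _
  case G10 =>
    intro z h
    rcases iot_iff.1 h with h' | ⟨a, b, ha, rfl, hr⟩
    · exact h'.symm
    · rw [Fin.castSucc_inj] at ha
      rw [← ha] at hr
      rw [hw b hr]
  case G11 => exact (Fin.castSucc_lt_last w).ne'
  case G12 =>
    intro z
    rcases Fin.eq_castSucc_or_eq_last z with ⟨b, rfl⟩ | rfl
    · right
      have hh : iot (P1 ⊔ P2) w.castSucc b.castSucc := by
        rw [hPsup]; exact iot_castSucc.2 trivial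
      rw [iot_sup] at hh
      exact hh
    · left
      exact Setoid.refl' _ _

lemma fin_two_cases (a : Fin 2) : a = 0 ∨ a = 1 := by
  rcases a with ⟨v, hv⟩
  interval_cases v
  · exact Or.inl rfl
  · exact Or.inr rfl

theorem inv_two : Inv 2 := by
  have hbt : ∀ s : Setoid (Fin 2), s = ⊥ ∨ s = ⊤ := by
    intro s
    by_cases h : s 0 1
    · right
      rw [Setoid.eq_top_iff]
      intro a b
      rcases fin_two_cases a with rfl | rfl <;> rcases fin_two_cases b with rfl | rfl
      · exact s.refl' 0
      · exact h
      · exact s.symm' h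
      · exact s.refl' 1
    · left
      apply le_antisymm _ bot_le
      intro a b hab
      rcases fin_two_cases a with rfl | rfl <;> rcases fin_two_cases b with rfl | rfl
      · rfl
      · exact absurd hab h
      · exact absurd (s.symm' hab) h
      · rfl
  refine ⟨⊥, ⊤, ⊥, ⊥, ?_, ?_, ?_, ?_, ⟨0, fun z h => h.symm⟩,
    0, 1, 0, 1, ?_, Setoid.refl' _ _, fun z h => h.symm, Setoid.refl' _ _,
    fun z h => h.symm, by decide, ?_⟩
  · apply Set.eq_univ_of_forall
    intro s
    rcases hbt s with rfl | rfl
    · exact subset_latticeClosure (by simp)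
    · exact subset_latticeClosure (by simp)
  · exact sup_top_eq ⊥
  · exact inf_top_eq ⊥
  · exact inf_idem ⊥
  · intro z h1 h2
    rw [← h1] at h2
    exact absurd (show (1 : Fin 2) = 0 from h2) (by decide)
  · intro z
    have hsup : (⊥ ⊔ ⊥ : Setoid (Fin 2)) = ⊥ := sup_idem ⊥
    rcases fin_two_cases z with rfl | rfl
    · left; rw [hsup]
    · right; rw [hsup]

theorem inv_all : ∀ k, Inv (k + 2) := by
  intro k
  induction k with
  | zero => exact inv_two
  | succ k ih => exact inv_succ ih

lemma fourGenerated_of_closure {L : Type*} [Lattice L] (a b c d : L)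
    (hcl : latticeClosure {a, b, c, d} = Set.univ)
    (Z : Finset L) (hZ : Z.card = 4) : FourGenerated L := by
  classical
  set X0 : Finset L := {a, b, c, d} with hX0
  have hsub : (X0 : Set L) = {a, b, c, d} := by simp [hX0]
  have hc : X0.card ≤ 4 := by
    have h2 : ({c, d} : Finset L).card ≤ 2 := by
      apply (Finset.card_insert_le _ _).trans
      simp
    have h3 : ({b, c, d} : Finset L).card ≤ 3 := by
      have := Finset.card_insert_le b ({c, d} : Finset L)
      omega
    have := Finset.card_insert_le a ({b, c, d} : Finset L)
    rw [hX0]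
    omega
  have hge : 4 ≤ (X0 ∪ Z).card := hZ ▸ Finset.card_le_card Finset.subset_union_right
  obtain ⟨u, hu1, _, hu3⟩ := Finset.exists_subsuperset_card_eq Finset.subset_union_left hc hge
  refine ⟨u, hu3, ?_⟩
  apply Set.eq_univ_of_univ_subset
  have hmono : latticeClosure ({a, b, c, d} : Set L) ⊆ latticeClosure (u : Set L) := by
    apply latticeClosure_mono
    rw [← hsub]
    exact_mod_cast hu1
  rw [← hcl]
  exact hmono

lemma exists_card_four {n : ℕ} (hn : 3 ≤ n) : ∃ Z : Finset (Setoid (Fin n)), Z.card = 4 := by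
  classical
  set a : Fin n := ⟨0, by omega⟩ with ha
  set b : Fin n := ⟨1, by omega⟩ with hb
  set c : Fin n := ⟨2, by omega⟩ with hc
  have hab : a ≠ b := by simp [ha, hb, Fin.ext_iff]
  have hac : a ≠ c := by simp [ha, hc, Fin.ext_iff]
  have hbc : b ≠ c := by simp [hb, hc, Fin.ext_iff]
  have h1 : (⊥ : Setoid (Fin n)) ≠ ⊤ := by
    intro h
    have hh : (⊥ : Setoid (Fin n)) a b := by rw [h]; trivial
    exact hab hh
  have h2 : (⊥ : Setoid (Fin n)) ≠ eAtom a b := by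
    intro h
    have hh : (⊥ : Setoid (Fin n)) a b := by rw [h]; exact eAtom_rel a b
    exact hab hh
  have h3 : (⊥ : Setoid (Fin n)) ≠ eAtom a c := by
    intro h
    have hh : (⊥ : Setoid (Fin n)) a c := by rw [h]; exact eAtom_rel a c
    exact hac hh
  have h4 : (⊤ : Setoid (Fin n)) ≠ eAtom a b := by
    intro h
    have hh : eAtom a b a c := by rw [← h]; trivial
    rcases eAtom_iff.1 hh with h' | ⟨_, h'⟩ | ⟨h', _⟩
    · exact hac h'
    · exact hbc h'.symm
    · exact hab h'
  have h5 : (⊤ : Setoid (Fin n)) ≠ eAtom a c := by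
    intro h
    have hh : eAtom a c a b := by rw [← h]; trivial
    rcases eAtom_iff.1 hh with h' | ⟨_, h'⟩ | ⟨h', _⟩
    · exact hab h'
    · exact hbc h'
    · exact hac h'
  have h6 : eAtom a b ≠ eAtom a c := by
    intro h
    have hh : eAtom a c a b := by rw [← h]; exact eAtom_rel a b
    rcases eAtom_iff.1 hh with h' | ⟨_, h'⟩ | ⟨h', _⟩
    · exact hab h'
    · exact hbc h'
    · exact hac h'
  refine ⟨{⊥, ⊤, eAtom a b, eAtom a c}, ?_⟩
  rw [Finset.card_insert_of_notMem (by simp [h1, h2, h3]),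
    Finset.card_insert_of_notMem (by simp [h4, h5]),
    Finset.card_insert_of_notMem (by simp [h6]),
    Finset.card_singleton]

end PartGen

/-- For every natural number `n ≥ 5`, the partition lattice `Part(n)`, i.e. the lattice
`Setoid (Fin n)` of all equivalence relations on an `n`-element set, is four-generated. -/
theorem part_fourGenerated (n : ℕ) (hn : 5 ≤ n) : FourGenerated (Setoid (Fin n)) := by
  have hI : PartGen.Inv n := by
    obtain ⟨k, rfl⟩ : ∃ k, n = k + 2 := ⟨n - 2, by omega⟩
    exact PartGen.inv_all k
  obtain ⟨P1, P2, Q1, Q2, hcl, _⟩ := hI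
  obtain ⟨Z, hZ⟩ := PartGen.exists_card_four (n := n) (by omega)
  exact PartGen.fourGenerated_of_closure P1 P2 Q1 Q2 hcl Z hZ
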